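/- For all positive integers α and β, the colength of the normalisation n_{α,β} of (x^α, y^β) is given by dim_ℂ ℂ[x,y]/n_{α,β} = (αβ + α + β − gcd(α,β))/2. -/

import Mathlib

open MvPolynomial

lemma support_le_of_mem_span (V : Set (Fin 2 →₀ ℕ)) (f : MvPolynomial (Fin 2) ℂ)
    (hf : f ∈ Ideal.span ((fun u => monomial u (1:ℂ)) '' V)) :
    ∀ d ∈ f.support, ∃ u ∈ V, u ≤ d := by
  refine Submodule.span_induction ?_ ?_ ?_ ?_ hf
  · rintro x ⟨u, hu, rfl⟩ d hd
    rw [support_monomial] at hd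
    simp only [one_ne_zero, if_false, Finset.mem_singleton] at hd
    exact ⟨u, hu, hd ▸ le_refl u⟩
  · intro d hd; simp at hd
  · intro x y _ _ hx hy d hd
    rcases Finset.mem_union.mp (Finsupp.support_add hd) with h | h
    · exact hx d h
    · exact hy d h
  · intro r x _ hx d hd
    have := support_mul r x hd
    rcases Finset.mem_add.mp this with ⟨d1, h1, d2, h2, rfl⟩
    obtain ⟨u, hu, hle⟩ := hx d2 h2
    exact ⟨u, hu, hle.trans (le_add_self)⟩

lemma pow_span_le (α β p : ℕ) :
    (Ideal.span {(X 0 : MvPolynomial (Fin 2) ℂ) ^ α, X 1 ^ β}) ^ p ≤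
      Ideal.span ((fun u => monomial u (1:ℂ)) ''
        {u | p * (α * β) ≤ u 0 * β + u 1 * α}) := by
  induction p with
  | zero =>
    rw [pow_zero, Ideal.one_eq_top]
    intro f _
    have h1 : (1 : MvPolynomial (Fin 2) ℂ) ∈ Ideal.span ((fun u => monomial u (1:ℂ)) ''
        {u | 0 * (α * β) ≤ u 0 * β + u 1 * α}) := by
      apply Ideal.subset_span
      exact ⟨0, by simp, by simp [monomial_zero']⟩
    simpa using Ideal.mul_mem_right f _ h1
  | succ p ih =>
    rw [pow_succ]
    refine le_trans (mul_le_mul' ih le_rfl) ?_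
    rw [Ideal.span_mul_span', Ideal.span_le]
    rintro f ⟨g, ⟨u, hu, rfl⟩, h, hh, rfl⟩
    rcases hh with rfl | rfl
    · apply Ideal.subset_span
      refine ⟨u + Finsupp.single 0 α, ?_, ?_⟩
      · simp only [Set.mem_setOf_eq, Finsupp.add_apply, Finsupp.single_apply] at hu ⊢
        norm_num
        nlinarith [hu]
      · show monomial (u + Finsupp.single 0 α) (1:ℂ) = monomial u 1 * (X 0 ^ α)
        rw [X_pow_eq_monomial, monomial_mul, mul_one]
    · apply Ideal.subset_span
      refine ⟨u + Finsupp.single 1 β, ?_, ?_⟩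
      · simp only [Set.mem_setOf_eq, Finsupp.add_apply, Finsupp.single_apply] at hu ⊢
        norm_num
        nlinarith [hu]
      · show monomial (u + Finsupp.single 1 β) (1:ℂ) = monomial u 1 * (X 1 ^ β)
        rw [X_pow_eq_monomial, monomial_mul, mul_one]

lemma xy_eq_monomial (a b : ℕ) :
    (X 0 : MvPolynomial (Fin 2) ℂ) ^ a * X 1 ^ b
      = monomial (Finsupp.single 0 a + Finsupp.single 1 b) 1 := by
  rw [X_pow_eq_monomial, X_pow_eq_monomial, monomial_mul, one_mul]

lemma mem_pow_iff (α β : ℕ) (hα : 0 < α) (hβ : 0 < β) (a b : ℕ) :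
    (∃ p : ℕ, 1 ≤ p ∧
      ((X 0 : MvPolynomial (Fin 2) ℂ) ^ a * X 1 ^ b) ^ p ∈
        (Ideal.span {(X 0 : MvPolynomial (Fin 2) ℂ) ^ α, X 1 ^ β}) ^ p)
    ↔ α * β ≤ a * β + b * α := by
  constructor
  · rintro ⟨p, hp1, hp⟩
    have h := pow_span_le α β p hp
    set e : Fin 2 →₀ ℕ := Finsupp.single 0 a + Finsupp.single 1 b with he
    have hmono : ((X 0 : MvPolynomial (Fin 2) ℂ) ^ a * X 1 ^ b) ^ p = monomial (p • e) 1 := by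
      rw [xy_eq_monomial, monomial_pow, one_pow]
    rw [hmono] at h
    have hsupp : (p • e) ∈ (monomial (p • e) (1:ℂ)).support := by
      rw [support_monomial]
      simp
    obtain ⟨u, hu, hle⟩ := support_le_of_mem_span _ _ h _ hsupp
    have h0 : (p • e) 0 = p * a := by simp [he]
    have h1 : (p • e) 1 = p * b := by simp [he]
    have hu0 : u 0 ≤ p * a := h0 ▸ hle 0
    have hu1 : u 1 ≤ p * b := h1 ▸ hle 1
    have : p * (α * β) ≤ p * (a * β + b * α) := by
      calc p * (α * β) ≤ u 0 * β + u 1 * α := hu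
        _ ≤ (p * a) * β + (p * b) * α := by
            exact Nat.add_le_add (Nat.mul_le_mul_right _ hu0) (Nat.mul_le_mul_right _ hu1)
        _ = p * (a * β + b * α) := by ring
    exact Nat.le_of_mul_le_mul_left this hp1
  · intro hab
    set p := α * β with hpdef
    have hp1 : 1 ≤ p := Nat.mul_pos hα hβ
    set i := min (a * β) (α * β) with hidef
    have hi : i ≤ p := min_le_right _ _
    have h1 : i * α ≤ p * a := by
      rcases min_cases (a * β) (α * β) with ⟨h, hc⟩ | ⟨h, hc⟩
      · rw [hidef, h]; calc a * β * α = (α * β) * a := by ring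
          _ ≤ _ := le_rfl
      · rw [hidef, h]
        calc α * β * α = α * (α * β) := by ring
          _ ≤ α * (a * β) := Nat.mul_le_mul_left _ (le_of_lt hc)
          _ = (α * β) * a := by ring
    have h2 : (p - i) * β ≤ p * b := by
      rcases min_cases (a * β) (α * β) with ⟨h, hc⟩ | ⟨h, hc⟩
      · rw [hidef, h]
        have hsub : p - a * β ≤ α * β - a * β := by omega
        calc (p - a * β) * β ≤ (α * β - a * β) * β := Nat.mul_le_mul_right _ hsub
          _ = (α - a) * β * β := by rw [Nat.sub_mul α a β]
          _ ≤ b * α * β := by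
              apply Nat.mul_le_mul_right
              have : (α - a) * β ≤ b * α := by
                have := Nat.sub_mul α a β
                omega
              exact this
          _ = (α * β) * b := by ring
      · simp [hidef, h, hpdef]
    refine ⟨p, hp1, ?_⟩
    set I := Ideal.span {(X 0 : MvPolynomial (Fin 2) ℂ) ^ α, X 1 ^ β} with hI
    have g1 : ((X 0 : MvPolynomial (Fin 2) ℂ) ^ α) ^ i ∈ I ^ i :=
      Ideal.pow_mem_pow (Ideal.subset_span (by simp)) i
    have g2 : ((X 1 : MvPolynomial (Fin 2) ℂ) ^ β) ^ (p - i) ∈ I ^ (p - i) :=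
      Ideal.pow_mem_pow (Ideal.subset_span (by simp)) _
    have g3 := Ideal.mul_mem_mul g1 g2
    rw [← pow_add, Nat.add_sub_cancel' hi] at g3
    have key : ((X 0 : MvPolynomial (Fin 2) ℂ) ^ a * X 1 ^ b) ^ p
        = (X 0 ^ (p * a - i * α) * X 1 ^ (p * b - (p - i) * β))
          * (((X 0 : MvPolynomial (Fin 2) ℂ) ^ α) ^ i * ((X 1 : MvPolynomial (Fin 2) ℂ) ^ β) ^ (p - i)) := by
      rw [mul_pow, ← pow_mul, ← pow_mul, ← pow_mul, ← pow_mul]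
      rw [mul_mul_mul_comm, ← pow_add, ← pow_add]
      congr 2
      · rw [mul_comm α i, Nat.sub_add_cancel h1, mul_comm a p]
      · rw [mul_comm β (p - i), Nat.sub_add_cancel h2, mul_comm b p]
    rw [key]
    exact Ideal.mul_mem_left _ _ g3

section Count
variable (α β : ℕ)

/-- the small grid -/
def G : Finset (ℕ × ℕ) := Finset.range α ×ˢ Finset.range β
/-- the staircase region -/
def Scnt : Finset (ℕ × ℕ) := (G α β).filter (fun q => q.1 * β + q.2 * α < α * β)

lemma line_card (hα : 0 < α) (hβ : 0 < β) :
    (((Finset.range (α+1)) ×ˢ (Finset.range (β+1))).filter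
      (fun q => q.1 * β + q.2 * α = α * β)).card = Nat.gcd α β + 1 := by
  set g := Nat.gcd α β with hg
  have hgpos : 0 < g := Nat.gcd_pos_of_pos_left _ hα
  set A := α / g with hA
  set B := β / g with hB
  have hαg : g * A = α := Nat.mul_div_cancel' (Nat.gcd_dvd_left _ _)
  have hβg : g * B = β := Nat.mul_div_cancel' (Nat.gcd_dvd_right _ _)
  have hApos : 0 < A := by
    rcases Nat.eq_zero_or_pos A with h | h
    · rw [h, mul_zero] at hαg; omega
    · exact h
  have hBpos : 0 < B := by
    rcases Nat.eq_zero_or_pos B with h | h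
    · rw [h, mul_zero] at hβg; omega
    · exact h
  have hco : Nat.Coprime A B := Nat.coprime_div_gcd_div_gcd hgpos
  have hkey : ∀ k, k ≤ g → k * A * β + (g - k) * B * α = α * β := by
    intro k hk
    have hx : A * β = B * α := by
      rw [← hαg, ← hβg]; ring
    have : k * A * β + (g - k) * B * α = k * (A * β) + (g - k) * (B * α) := by ring
    rw [this, hx, ← add_mul, Nat.add_sub_cancel' hk, ← hx, ← mul_assoc, hαg]
  rw [← Finset.card_range (g + 1)]
  symm
  apply Finset.card_bij (fun k _ => ((k * A : ℕ), ((g - k) * B : ℕ)))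
  · intro k hk
    rw [Finset.mem_range] at hk
    have hk' : k ≤ g := by omega
    rw [Finset.mem_filter, Finset.mem_product, Finset.mem_range, Finset.mem_range]
    refine ⟨⟨?_, ?_⟩, hkey k hk'⟩
    · have : k * A ≤ g * A := Nat.mul_le_mul_right _ hk'
      omega
    · have : (g - k) * B ≤ g * B := Nat.mul_le_mul_right _ (by omega)
      omega
  · intro k₁ h₁ k₂ h₂ he
    have := congrArg Prod.fst he
    simp only at this
    exact Nat.eq_of_mul_eq_mul_right hApos this
  · rintro ⟨u, v⟩ hb
    rw [Finset.mem_filter, Finset.mem_product, Finset.mem_range, Finset.mem_range] at hb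
    obtain ⟨⟨hu, hv⟩, hline⟩ := hb
    simp only at hu hv hline
    have hv' : v ≤ β := by omega
    have h1 : u * β = α * (β - v) := by
      rw [Nat.mul_sub, mul_comm α v]
      omega
    have h2 : u * (g * B) = (g * A) * (β - v) := by rw [hβg, hαg]; exact h1
    have h3 : u * B = A * (β - v) := by
      have : g * (u * B) = g * (A * (β - v)) := by
        calc g * (u * B) = u * (g * B) := by ring
          _ = g * A * (β - v) := h2
          _ = g * (A * (β - v)) := by ring
      exact Nat.eq_of_mul_eq_mul_left hgpos this
    have h4 : A ∣ u * B := ⟨β - v, h3⟩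
    have h5 : A ∣ u := (Nat.Coprime.dvd_of_dvd_mul_right hco) h4
    obtain ⟨k, hk⟩ := h5
    have hk' : k ≤ g := by
      by_contra hcon
      push_neg at hcon
      have : g * A < k * A := Nat.mul_lt_mul_of_lt_of_le hcon le_rfl hApos
      rw [mul_comm k A, ← hk] at this
      omega
    refine ⟨k, Finset.mem_range.mpr (by omega), ?_⟩
    have hu' : u = k * A := by rw [hk, mul_comm]
    have hveq : v = (g - k) * B := by
      have := hkey k hk'
      rw [← hu'] at this
      have hβv : (g - k) * B ≤ g * B := Nat.mul_le_mul_right _ (by omega)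
      -- u * β + v * α = α * β and u * β + (g-k)*B*α = α*β  ⟹ v*α = (g-k)*B*α
      have hvα : v * α = (g - k) * B * α := by omega
      exact Nat.eq_of_mul_eq_mul_right hα hvα
    rw [hu', hveq]

lemma mem_G (q : ℕ × ℕ) : q ∈ G α β ↔ q.1 < α ∧ q.2 < β := by
  rw [G, Finset.mem_product, Finset.mem_range, Finset.mem_range]

lemma Scnt_card (hα : 0 < α) (hβ : 0 < β) :
    2 * (Scnt α β).card + Nat.gcd α β = α * β + α + β := by
  classical
  set g := Nat.gcd α β with hg
  have hgle : g ≤ α + β := le_trans (Nat.gcd_le_left _ hα) (by omega)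
  -- A: reflected set
  set A := (G α β).filter (fun q => α * β < q.1 * β + q.2 * α + α + β) with hA
  -- D: intersection
  set D := (G α β).filter
      (fun q => q.1 * β + q.2 * α < α * β ∧ α * β < q.1 * β + q.2 * α + α + β) with hD
  -- step A : card S = card A
  have hSA : (Scnt α β).card = A.card := by
    apply Finset.card_bij (fun q _ => ((α - 1 - q.1, β - 1 - q.2) : ℕ × ℕ))
    · intro q hq
      rw [Scnt, Finset.mem_filter, mem_G] at hq
      obtain ⟨⟨h1, h2⟩, h3⟩ := hq
      rw [hA, Finset.mem_filter, mem_G]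
      try simp only
      constructor
      · constructor <;> omega
      · have e1 : (α - 1 - q.1) * β = α * β - β - q.1 * β := by
          rw [Nat.sub_mul, Nat.sub_mul, one_mul]
        have e2 : (β - 1 - q.2) * α = β * α - α - q.2 * α := by
          rw [Nat.sub_mul, Nat.sub_mul, one_mul]
        have e3 : q.1 * β + β ≤ α * β := by
          have : (q.1 + 1) * β ≤ α * β := Nat.mul_le_mul_right _ (by omega)
          rw [add_mul, one_mul] at this
          exact this
        have e4 : q.2 * α + α ≤ β * α := by
          have : (q.2 + 1) * α ≤ β * α := Nat.mul_le_mul_right _ (by omega)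
          rw [add_mul, one_mul] at this
          exact this
        have e5 : α * β = β * α := mul_comm α β
        omega
    · intro q₁ h₁ q₂ h₂ he
      rw [Scnt, Finset.mem_filter, mem_G] at h₁ h₂
      have f1 := congrArg Prod.fst he
      have f2 := congrArg Prod.snd he
      simp only at f1 f2
      ext
      · omega
      · omega
    · rintro ⟨u, v⟩ hb
      rw [hA, Finset.mem_filter, mem_G] at hb
      obtain ⟨⟨h1, h2⟩, h3⟩ := hb
      simp only at h1 h2 h3
      refine ⟨(α - 1 - u, β - 1 - v), ?_, ?_⟩
      · rw [Scnt, Finset.mem_filter, mem_G]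
        try simp only
        constructor
        · constructor <;> omega
        · have e1 : (α - 1 - u) * β = α * β - β - u * β := by
            rw [Nat.sub_mul, Nat.sub_mul, one_mul]
          have e2 : (β - 1 - v) * α = β * α - α - v * α := by
            rw [Nat.sub_mul, Nat.sub_mul, one_mul]
          have e3 : u * β + β ≤ α * β := by
            have : (u + 1) * β ≤ α * β := Nat.mul_le_mul_right _ (by omega)
            rw [add_mul, one_mul] at this
            exact this
          have e4 : v * α + α ≤ β * α := by
            have : (v + 1) * α ≤ β * α := Nat.mul_le_mul_right _ (by omega)
            rw [add_mul, one_mul] at this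
            exact this
          have e5 : α * β = β * α := mul_comm α β
          omega
      · ext <;> simp <;> omega
  -- step B : S.card + A.card = α*β + D.card
  have hSB : (Scnt α β).card + A.card = α * β + D.card := by
    have hunion : Scnt α β ∪ A = G α β := by
      apply Finset.Subset.antisymm
      · apply Finset.union_subset <;> exact Finset.filter_subset _ _
      · intro q hq
        rcases lt_or_ge (q.1 * β + q.2 * α) (α * β) with h | h
        · exact Finset.mem_union_left _ (Finset.mem_filter.mpr ⟨hq, h⟩)
        · exact Finset.mem_union_right _ (Finset.mem_filter.mpr ⟨hq, by omega⟩)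
    have hinter : Scnt α β ∩ A = D := by
      rw [Scnt, hA, hD, ← Finset.filter_and]
    have := Finset.card_union_add_card_inter (Scnt α β) A
    rw [hunion, hinter] at this
    have hGcard : (G α β).card = α * β := by
      rw [G, Finset.card_product, Finset.card_range, Finset.card_range]
    omega
  -- big grid objects
  set bigG := (Finset.range (α+1)) ×ˢ (Finset.range (β+1)) with hbigG
  set C := bigG.filter (fun q => q.1 * β + q.2 * α ≤ α * β) with hC
  set L := bigG.filter (fun q => q.1 * β + q.2 * α = α * β) with hL
  set S' := bigG.filter (fun q => q.1 * β + q.2 * α < α * β) with hS'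
  have hmem_bigG : ∀ q : ℕ × ℕ, q ∈ bigG ↔ q.1 < α + 1 ∧ q.2 < β + 1 := by
    intro q
    rw [hbigG, Finset.mem_product, Finset.mem_range, Finset.mem_range]
  -- C splits as S' and L
  have hCa : C.filter (fun q => q.1 * β + q.2 * α < α * β) = S' := by
    rw [hC, Finset.filter_filter, hS']
    apply Finset.filter_congr
    intro q _
    try simp only
    constructor
    · rintro ⟨_, h⟩; exact h
    · intro h; exact ⟨le_of_lt h, h⟩
  have hCb : C.filter (fun q => ¬ (q.1 * β + q.2 * α < α * β)) = L := by
    rw [hC, Finset.filter_filter, hL]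
    apply Finset.filter_congr
    intro q _
    try simp only
    omega
  have hCsplit : S'.card + L.card = C.card := by
    rw [← hCa, ← hCb]
    exact Finset.card_filter_add_card_filter_not _
  have hS'S : S' = Scnt α β := by
    ext q
    rw [hS', Finset.mem_filter, hmem_bigG q, Scnt, Finset.mem_filter, mem_G]
    constructor
    · rintro ⟨⟨h1, h2⟩, h3⟩
      have ha : q.1 < α := by
        by_contra h
        push_neg at h
        have := Nat.mul_le_mul_right β h
        omega
      have hb : q.2 < β := by
        by_contra h
        push_neg at h
        have := Nat.mul_le_mul_right α h
        have e5 : α * β = β * α := mul_comm α β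
        omega
      exact ⟨⟨ha, hb⟩, h3⟩
    · rintro ⟨⟨h1, h2⟩, h3⟩
      exact ⟨⟨by omega, by omega⟩, h3⟩
  have hLcard : L.card = g + 1 := line_card α β hα hβ
  have hC2 : C.card = (Scnt α β).card + (g + 1) := by
    rw [← hCsplit, hS'S, hLcard]
  -- border of C
  set Bd := C.filter (fun q => q.1 = 0 ∨ q.2 = 0) with hBd
  set T' := C.filter (fun q => ¬ (q.1 = 0 ∨ q.2 = 0)) with hT'
  have hCsplit2 : Bd.card + T'.card = C.card :=
    Finset.card_filter_add_card_filter_not _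
  have hBdcard : Bd.card = α + β + 1 := by
    rw [← Finset.card_range (α + β + 1)]
    symm
    apply Finset.card_bij (fun k _ => if k ≤ β then ((0 : ℕ), k) else (k - β, 0))
    · intro k hk
      rw [Finset.mem_range] at hk
      rw [hBd, Finset.mem_filter, hC, Finset.mem_filter, hmem_bigG]
      split_ifs with h
      · refine ⟨⟨⟨by omega, by omega⟩, ?_⟩, Or.inl rfl⟩
        try simp only
        have := Nat.mul_le_mul_right α h
        have e5 : α * β = β * α := mul_comm α β
        omega
      · refine ⟨⟨⟨by omega, by omega⟩, ?_⟩, Or.inr rfl⟩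
        try simp only
        have hkb : k - β ≤ α := by omega
        have := Nat.mul_le_mul_right β hkb
        omega
    · intro k₁ h₁ k₂ h₂ he
      rw [Finset.mem_range] at h₁ h₂
      split_ifs at he with ha hb hb
      · exact congrArg Prod.snd he
      · have := congrArg Prod.fst he
        simp only at this
        omega
      · have := congrArg Prod.fst he
        simp only at this
        omega
      · have := congrArg Prod.fst he
        simp only at this
        omega
    · rintro ⟨u, v⟩ hb
      rw [hBd, Finset.mem_filter, hC, Finset.mem_filter, hmem_bigG] at hb
      obtain ⟨⟨⟨h1, h2⟩, h3⟩, h4⟩ := hb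
      simp only at h1 h2 h3 h4
      rcases h4 with rfl | rfl
      · refine ⟨v, Finset.mem_range.mpr (by omega), ?_⟩
        rw [if_pos (by omega)]
      · rcases Nat.eq_zero_or_pos u with rfl | hu
        · refine ⟨0, Finset.mem_range.mpr (by omega), ?_⟩
          rw [if_pos (by omega)]
        · refine ⟨β + u, Finset.mem_range.mpr (by omega), ?_⟩
          rw [if_neg (by omega)]
          simp
  -- T' ≃ T
  set T := (G α β).filter (fun q => q.1 * β + q.2 * α + α + β ≤ α * β) with hT
  have hT'T : T'.card = T.card := by
    apply Finset.card_bij (fun q _ => ((q.1 - 1, q.2 - 1) : ℕ × ℕ))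
    · intro q hq
      rw [hT', Finset.mem_filter, hC, Finset.mem_filter, hmem_bigG] at hq
      obtain ⟨⟨⟨h1, h2⟩, h3⟩, h4⟩ := hq
      push_neg at h4
      rw [hT, Finset.mem_filter, mem_G]
      try simp only
      refine ⟨⟨by omega, by omega⟩, ?_⟩
      have e1 : (q.1 - 1) * β = q.1 * β - β := by
        rw [Nat.sub_mul, one_mul]
      have e2 : (q.2 - 1) * α = q.2 * α - α := by
        rw [Nat.sub_mul, one_mul]
      have e3 : β ≤ q.1 * β := by
        calc β = 1 * β := (one_mul β).symm
          _ ≤ q.1 * β := Nat.mul_le_mul_right _ (by omega)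
      have e4 : α ≤ q.2 * α := by
        calc α = 1 * α := (one_mul α).symm
          _ ≤ q.2 * α := Nat.mul_le_mul_right _ (by omega)
      omega
    · intro q₁ h₁ q₂ h₂ he
      rw [hT', Finset.mem_filter] at h₁ h₂
      obtain ⟨_, h4⟩ := h₁
      obtain ⟨_, h4'⟩ := h₂
      push_neg at h4 h4'
      have f1 := congrArg Prod.fst he
      have f2 := congrArg Prod.snd he
      simp only at f1 f2
      ext
      · omega
      · omega
    · rintro ⟨a, b⟩ hb
      rw [hT, Finset.mem_filter, mem_G] at hb
      obtain ⟨⟨h1, h2⟩, h3⟩ := hb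
      simp only at h1 h2 h3
      refine ⟨(a + 1, b + 1), ?_, by simp⟩
      rw [hT', Finset.mem_filter, hC, Finset.mem_filter, hmem_bigG]
      try simp only
      refine ⟨⟨⟨by omega, by omega⟩, ?_⟩, by omega⟩
      have e1 : (a + 1) * β = a * β + β := by rw [add_mul, one_mul]
      have e2 : (b + 1) * α = b * α + α := by rw [add_mul, one_mul]
      omega
  -- S splits as T and D
  have hSsplit : T.card + D.card = (Scnt α β).card := by
    have hfa : (Scnt α β).filter (fun q => q.1 * β + q.2 * α + α + β ≤ α * β) = T := by
      rw [Scnt, Finset.filter_filter, hT]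
      apply Finset.filter_congr
      intro q _
      try simp only
      omega
    have hfb : (Scnt α β).filter (fun q => ¬ (q.1 * β + q.2 * α + α + β ≤ α * β)) = D := by
      rw [Scnt, Finset.filter_filter, hD]
      apply Finset.filter_congr
      intro q _
      try simp only
      omega
    rw [← hfa, ← hfb]
    exact Finset.card_filter_add_card_filter_not _
  omega
end Count
noncomputable def nIdeal (α β : ℕ) : Ideal (MvPolynomial (Fin 2) ℂ) :=
  Ideal.span {f : MvPolynomial (Fin 2) ℂ | ∃ a b : ℕ,
    f = X 0 ^ a * X 1 ^ b ∧
    ∃ p : ℕ, 1 ≤ p ∧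
      ((X 0 : MvPolynomial (Fin 2) ℂ) ^ a * X 1 ^ b) ^ p ∈
        (Ideal.span {(X 0 : MvPolynomial (Fin 2) ℂ) ^ α, X 1 ^ β}) ^ p}

lemma finsupp_fin2_eq (u : Fin 2 →₀ ℕ) :
    u = Finsupp.single 0 (u 0) + Finsupp.single 1 (u 1) := by
  ext i
  fin_cases i <;> simp [Finsupp.single_apply]

/-- the set of exponents generating the normalisation -/
def USet (α β : ℕ) : Set (Fin 2 →₀ ℕ) := {u | α * β ≤ u 0 * β + u 1 * α}

lemma nIdeal_eq (α β : ℕ) (hα : 0 < α) (hβ : 0 < β) :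
    nIdeal α β = Ideal.span ((fun u => monomial u (1:ℂ)) '' USet α β) := by
  apply le_antisymm
  · rw [nIdeal, Ideal.span_le]
    rintro f ⟨a, b, rfl, hp⟩
    apply Ideal.subset_span
    refine ⟨Finsupp.single 0 a + Finsupp.single 1 b, ?_, (xy_eq_monomial a b).symm⟩
    have := (mem_pow_iff α β hα hβ a b).mp hp
    simpa [USet, Finsupp.single_apply] using this
  · rw [Ideal.span_le]
    rintro f ⟨u, hu, rfl⟩
    apply Ideal.subset_span
    refine ⟨u 0, u 1, ?_, ?_⟩
    · rw [xy_eq_monomial, ← finsupp_fin2_eq]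
    · exact (mem_pow_iff α β hα hβ (u 0) (u 1)).mpr hu

lemma USet_up (α β : ℕ) : ∀ u ∈ USet α β, ∀ d, u ≤ d → d ∈ USet α β := by
  intro u hu d hle
  rw [USet, Set.mem_setOf_eq] at hu ⊢
  calc α * β ≤ u 0 * β + u 1 * α := hu
    _ ≤ d 0 * β + d 1 * α :=
        Nat.add_le_add (Nat.mul_le_mul_right _ (hle 0)) (Nat.mul_le_mul_right _ (hle 1))

/-- the staircase exponent set, as a finset of `Fin 2 →₀ ℕ` -/
noncomputable def SFin (α β : ℕ) : Finset (Fin 2 →₀ ℕ) :=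
  (Scnt α β).image (fun q => Finsupp.single 0 q.1 + Finsupp.single 1 q.2)

lemma eval_single_add (a b : ℕ) :
    ((Finsupp.single (0 : Fin 2) a + Finsupp.single 1 b : Fin 2 →₀ ℕ)) 0 = a ∧
    ((Finsupp.single (0 : Fin 2) a + Finsupp.single 1 b : Fin 2 →₀ ℕ)) 1 = b := by
  constructor <;> simp [Finsupp.single_apply]

lemma SFin_card (α β : ℕ) : (SFin α β).card = (Scnt α β).card := by
  rw [SFin]
  apply Finset.card_image_of_injOn
  intro q₁ _ q₂ _ he
  have h0 := congrFun (congrArg (DFunLike.coe) he) 0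
  have h1 := congrFun (congrArg (DFunLike.coe) he) 1
  simp only [Finsupp.add_apply, Finsupp.single_apply] at h0 h1
  norm_num at h0 h1
  ext
  · exact h0
  · exact h1

lemma mem_SFin (α β : ℕ) (hα : 0 < α) (hβ : 0 < β) (u : Fin 2 →₀ ℕ) :
    u ∈ SFin α β ↔ u ∉ USet α β := by
  rw [USet, Set.mem_setOf_eq, not_le, SFin, Finset.mem_image]
  constructor
  · rintro ⟨q, hq, rfl⟩
    rw [Scnt, Finset.mem_filter] at hq
    obtain ⟨eq0, eq1⟩ := eval_single_add q.1 q.2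
    rw [eq0, eq1]
    exact hq.2
  · intro hu
    refine ⟨(u 0, u 1), ?_, (finsupp_fin2_eq u).symm⟩
    rw [Scnt, Finset.mem_filter, mem_G]
    simp only
    refine ⟨⟨?_, ?_⟩, hu⟩
    · by_contra h
      push_neg at h
      have := Nat.mul_le_mul_right β h
      omega
    · by_contra h
      push_neg at h
      have := Nat.mul_le_mul_right α h
      have e5 : α * β = β * α := mul_comm α β
      omega

noncomputable def phi (α β : ℕ) : MvPolynomial (Fin 2) ℂ →ₗ[ℂ] (SFin α β → ℂ) :=
  LinearMap.pi fun d => lcoeff ℂ (d : Fin 2 →₀ ℕ)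

lemma phi_surj (α β : ℕ) : Function.Surjective (phi α β) := by
  intro g
  refine ⟨∑ d ∈ (SFin α β).attach, g d • monomial (d : Fin 2 →₀ ℕ) 1, ?_⟩
  funext e
  simp only [phi, LinearMap.pi_apply, lcoeff_apply]
  rw [coeff_sum]
  rw [Finset.sum_eq_single e]
  · simp [coeff_monomial]
  · intro d _ hd
    simp only [coeff_smul, coeff_monomial]
    rw [if_neg (by exact fun h => hd (Subtype.ext h))]
    simp
  · intro h
    exact absurd (Finset.mem_attach _ e) h

lemma ker_phi (α β : ℕ) (hα : 0 < α) (hβ : 0 < β) :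
    LinearMap.ker (phi α β) = Submodule.restrictScalars ℂ (nIdeal α β) := by
  ext f
  simp only [LinearMap.mem_ker, Submodule.restrictScalars_mem]
  constructor
  · intro hf
    have hsupp : ∀ d ∈ f.support, d ∈ USet α β := by
      intro d hd
      by_contra hdu
      have hne : coeff d f ≠ 0 := by
        rwa [MvPolynomial.mem_support_iff] at hd
      apply hne
      have := congrFun hf ⟨d, (mem_SFin α β hα hβ d).mpr hdu⟩
      simpa [phi] using this
    rw [nIdeal_eq α β hα hβ, ← MvPolynomial.support_sum_monomial_coeff f]
    apply Ideal.sum_mem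
    intro d hd
    have : monomial d (coeff d f) = (C (coeff d f)) * monomial d 1 := by
      rw [C_mul_monomial, mul_one]
    rw [this]
    exact Ideal.mul_mem_left _ _ (Ideal.subset_span ⟨d, hsupp d hd, rfl⟩)
  · intro hf
    have hsupp := support_le_of_mem_span (USet α β) f ((nIdeal_eq α β hα hβ) ▸ hf)
    funext e
    simp only [phi, LinearMap.pi_apply, lcoeff_apply, Pi.zero_apply]
    by_contra hne
    have he : (e : Fin 2 →₀ ℕ) ∈ f.support := MvPolynomial.mem_support_iff.mpr hne
    obtain ⟨u, hu, hle⟩ := hsupp _ he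
    exact ((mem_SFin α β hα hβ e).mp e.2) (USet_up α β u hu _ hle)

/-- **Colength of `n_{α,β}`.** For positive integers `α, β`, the colength of the
normalisation of `(x^α, y^β)` is `(αβ + α + β − gcd(α,β))/2`. -/
theorem colength_nIdeal (α β : ℕ) (hα : 0 < α) (hβ : 0 < β) :
    Module.finrank ℂ (MvPolynomial (Fin 2) ℂ ⧸ nIdeal α β) =
      (α * β + α + β - Nat.gcd α β) / 2 := by
  have equiv : (MvPolynomial (Fin 2) ℂ ⧸ nIdeal α β) ≃ₗ[ℂ] (SFin α β → ℂ) :=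
    ((Submodule.Quotient.restrictScalarsEquiv ℂ (nIdeal α β)).symm.trans
      (Submodule.quotEquivOfEq _ _ (ker_phi α β hα hβ).symm)).trans
      ((phi α β).quotKerEquivOfSurjective (phi_surj α β))
  rw [equiv.finrank_eq, Module.finrank_pi, Fintype.card_coe, SFin_card]
  have hcount := Scnt_card α β hα hβ
  have hgle : Nat.gcd α β ≤ α + β := le_trans (Nat.gcd_le_left _ hα) (by omega)
  omega
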